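/- Let f : ℝⁿ → ℝ be convex and differentiable, ψ : ℝⁿ → ℝ ∪ {+∞} convex, proper, and closed, F = f + ψ, and let x* be a minimizer of F with F* = F(x*). Suppose μ ≥ 0 and F satisfies the optimal-set strong convexity inequality at x with respect to x*: for all λ ∈ [0,1], F(λx + (1 − λ)x*) ≤ λF(x) + (1 − λ)F* − (μλ(1 − λ)/2)‖x − x*‖². Let H be a symmetric matrix. Then for all λ ∈ [0,1], Q* ≤ λ(F* − F(x)) − (μλ(1 − λ)/2)‖x − x*‖² + (λ²/2)(x − x*)ᵀH(x − x*) ≤ λ(F* − F(x)) + (1/2)‖x − x*‖²(‖H‖λ² − μλ(1 − λ)), where Q* = inf_d Q(d) and ‖H‖ is the operator (spectral) norm. In particular, taking λ = μ/(μ + ‖H‖), Q* ≤ (μ/(μ + ‖H‖))·(F* − F(x)). -/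

import Mathlib

/-
Setting: minimize F = f + ψ over ℝⁿ (modeled as `EuclideanSpace ℝ (Fin n)`), where
f : ℝⁿ → ℝ is smooth and ψ : ℝⁿ → ℝ ∪ {+∞} (modeled as `EReal`-valued, never ⊥)
is convex, proper and closed.  The quadratic model at x with symmetric operator H is
Q(d) = ⟪∇f(x), d⟫ + (1/2)⟪H d, d⟫ + ψ(x+d) − ψ(x), and Δ(d) = ⟪∇f(x), d⟫ + ψ(x+d) − ψ(x).
-/

open scoped RealInnerProductSpace
open Set Filter Topology

noncomputable section

/-- Convexity for extended-real-valued functions (values in ℝ ∪ {±∞}). -/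
def ConvexE {n : ℕ} (g : EuclideanSpace ℝ (Fin n) → EReal) : Prop :=
  ∀ x y : EuclideanSpace ℝ (Fin n), ∀ a b : ℝ, 0 ≤ a → 0 ≤ b → a + b = 1 →
    g (a • x + b • y) ≤ (a : EReal) * g x + (b : EReal) * g y

/-- ψ is proper: it never takes the value −∞ (its values lie in ℝ ∪ {+∞})
and it is finite somewhere. -/
def ProperPsi {n : ℕ} (ψ : EuclideanSpace ℝ (Fin n) → EReal) : Prop :=
  (∀ x, ψ x ≠ ⊥) ∧ ∃ x, ψ x ≠ ⊤

/-- ψ is closed, i.e. lower semicontinuous. -/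
def ClosedPsi {n : ℕ} (ψ : EuclideanSpace ℝ (Fin n) → EReal) : Prop :=
  LowerSemicontinuous ψ

/-- H is a symmetric (self-adjoint) linear operator. -/
def SymmCLM {n : ℕ} (H : EuclideanSpace ℝ (Fin n) →L[ℝ] EuclideanSpace ℝ (Fin n)) : Prop :=
  ∀ u v, ⟪H u, v⟫ = ⟪u, H v⟫

/-- m is the smallest eigenvalue of the symmetric operator H
(characterized as the minimum of the Rayleigh quotient over the unit sphere). -/
def IsSmallestEigenvalue {n : ℕ} (H : EuclideanSpace ℝ (Fin n) →L[ℝ] EuclideanSpace ℝ (Fin n))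
    (m : ℝ) : Prop :=
  IsLeast {r : ℝ | ∃ u : EuclideanSpace ℝ (Fin n), ‖u‖ = 1 ∧ r = ⟪H u, u⟫} m

/-- The objective F = f + ψ (extended-real-valued). -/
def Fm {n : ℕ} (f : EuclideanSpace ℝ (Fin n) → ℝ) (ψ : EuclideanSpace ℝ (Fin n) → EReal)
    (x : EuclideanSpace ℝ (Fin n)) : EReal :=
  (f x : EReal) + ψ x

/-- The quadratic model Q(d) = ∇f(x)ᵀd + (1/2)dᵀHd + ψ(x+d) − ψ(x). -/
def Qm {n : ℕ} (f : EuclideanSpace ℝ (Fin n) → ℝ) (ψ : EuclideanSpace ℝ (Fin n) → EReal)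
    (H : EuclideanSpace ℝ (Fin n) →L[ℝ] EuclideanSpace ℝ (Fin n))
    (x d : EuclideanSpace ℝ (Fin n)) : EReal :=
  ((⟪gradient f x, d⟫ + 1 / 2 * ⟪H d, d⟫ : ℝ) : EReal) + ψ (x + d) - ψ x

/-- Δ(d) = ∇f(x)ᵀd + ψ(x+d) − ψ(x). -/
def Dm {n : ℕ} (f : EuclideanSpace ℝ (Fin n) → ℝ) (ψ : EuclideanSpace ℝ (Fin n) → EReal)
    (x d : EuclideanSpace ℝ (Fin n)) : EReal :=
  ((⟪gradient f x, d⟫ : ℝ) : EReal) + ψ (x + d) - ψ x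

/-- g is σ-strongly convex: g − (σ/2)‖·‖² is convex. -/
def StrongConvexE {n : ℕ} (σ : ℝ) (g : EuclideanSpace ℝ (Fin n) → EReal) : Prop :=
  ConvexE (fun d => g d - ((σ / 2 * ‖d‖ ^ 2 : ℝ) : EReal))

/-- The solution set Ω = argmin F. -/
def SolSet {n : ℕ} (f : EuclideanSpace ℝ (Fin n) → ℝ)
    (ψ : EuclideanSpace ℝ (Fin n) → EReal) : Set (EuclideanSpace ℝ (Fin n)) :=
  {y | ∀ z, Fm f ψ y ≤ Fm f ψ z}

/-- (Lemma on Q*) With f convex differentiable, x* a minimizer of F = f + ψ,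
F* = F(x*), μ ≥ 0, and F satisfying the optimal-set strong convexity inequality at x with
respect to x*, for every λ ∈ [0,1]:
Q* ≤ λ(F* − F(x)) − (μλ(1−λ)/2)‖x − x*‖² + (λ²/2)(x − x*)ᵀH(x − x*)
   ≤ λ(F* − F(x)) + (1/2)‖x − x*‖²(‖H‖λ² − μλ(1−λ)),
and in particular, taking λ = μ/(μ + ‖H‖), Q* ≤ (μ/(μ + ‖H‖))(F* − F(x)). -/
-- aux lemma
lemma grad_ineq {n : ℕ} (f : EuclideanSpace ℝ (Fin n) → ℝ)
    (hf : Differentiable ℝ f) (hfconv : ConvexOn ℝ Set.univ f)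
    (x v : EuclideanSpace ℝ (Fin n)) :
    ⟪gradient f x, v⟫ ≤ f (x + v) - f x := by
  set g : ℝ → ℝ := fun t => f (x + t • v) with hg
  have hgconv : ConvexOn ℝ Set.univ g := by
    have h := hfconv.comp_affineMap (AffineMap.lineMap x (x + v))
    have he2 : (f ∘ (AffineMap.lineMap x (x + v))) = g := by
      funext t
      simp [AffineMap.lineMap_apply, hg, add_comm]
    rw [Set.preimage_univ, he2] at h
    exact h
  have hline : HasDerivAt (fun t : ℝ => x + t • v) v 0 := by
    simpa using ((hasDerivAt_id (0:ℝ)).smul_const v).const_add x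
  have hgd : HasDerivAt g (⟪gradient f x, v⟫) 0 := by
    have h1 : HasFDerivAt f (fderiv ℝ f x) x := (hf x).hasFDerivAt
    have h1' : HasFDerivAt f (fderiv ℝ f x) (x + (0:ℝ) • v) := by simpa using h1
    have h2 := h1'.comp_hasDerivAt 0 hline
    have h3 : ⟪gradient f x, v⟫ = fderiv ℝ f x v := by
      rw [gradient]
      rw [← InnerProductSpace.toDual_apply_apply]
      simp
    rw [h3]
    exact h2
  have := hgconv.le_slope_of_hasDerivAt (mem_univ (0:ℝ)) (mem_univ (1:ℝ)) one_pos hgd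
  simpa [slope_def_field, hg] using this

theorem Qstar_bound_optimal_set_strong_convexity {n : ℕ}
    (f : EuclideanSpace ℝ (Fin n) → ℝ) (ψ : EuclideanSpace ℝ (Fin n) → EReal)
    (H : EuclideanSpace ℝ (Fin n) →L[ℝ] EuclideanSpace ℝ (Fin n))
    (x xstar : EuclideanSpace ℝ (Fin n)) (μ : ℝ)
    (hf : Differentiable ℝ f) (hfconv : ConvexOn ℝ Set.univ f)
    (hψconv : ConvexE ψ) (hψproper : ProperPsi ψ) (hψclosed : ClosedPsi ψ)
    (hdom : ψ x ≠ ⊤)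
    (hH : SymmCLM H)
    (hmin : ∀ y, Fm f ψ xstar ≤ Fm f ψ y)
    (hμ : 0 ≤ μ)
    (hossc : ∀ lam : ℝ, lam ∈ Set.Icc (0 : ℝ) 1 →
        Fm f ψ (lam • x + (1 - lam) • xstar) ≤
          ((lam : ℝ) : EReal) * Fm f ψ x + ((1 - lam : ℝ) : EReal) * Fm f ψ xstar -
            ((μ * lam * (1 - lam) / 2 * ‖x - xstar‖ ^ 2 : ℝ) : EReal)) :
    (∀ lam : ℝ, lam ∈ Set.Icc (0 : ℝ) 1 →
        (⨅ e, Qm f ψ H x e) ≤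
            ((lam : ℝ) : EReal) * (Fm f ψ xstar - Fm f ψ x) -
                ((μ * lam * (1 - lam) / 2 * ‖x - xstar‖ ^ 2 : ℝ) : EReal) +
              ((lam ^ 2 / 2 * ⟪H (x - xstar), x - xstar⟫ : ℝ) : EReal) ∧
          ((lam : ℝ) : EReal) * (Fm f ψ xstar - Fm f ψ x) -
                ((μ * lam * (1 - lam) / 2 * ‖x - xstar‖ ^ 2 : ℝ) : EReal) +
              ((lam ^ 2 / 2 * ⟪H (x - xstar), x - xstar⟫ : ℝ) : EReal) ≤
            ((lam : ℝ) : EReal) * (Fm f ψ xstar - Fm f ψ x) +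
              ((1 / 2 * ‖x - xstar‖ ^ 2 * (‖H‖ * lam ^ 2 - μ * lam * (1 - lam)) : ℝ) : EReal)) ∧
      (⨅ e, Qm f ψ H x e) ≤ ((μ / (μ + ‖H‖) : ℝ) : EReal) * (Fm f ψ xstar - Fm f ψ x) := by
  obtain ⟨hψbot, -⟩ := hψproper
  obtain ⟨px, hpx⟩ : ∃ p : ℝ, ψ x = (p : EReal) :=
    ⟨(ψ x).toReal, (EReal.coe_toReal hdom (hψbot x)).symm⟩
  have hFx : Fm f ψ x = ((f x + px : ℝ) : EReal) := by
    simp [Fm, hpx]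
  have hFs_ne_top : Fm f ψ xstar ≠ ⊤ := by
    intro h
    have := hmin x
    rw [h, hFx] at this
    exact (EReal.coe_ne_top _) (top_le_iff.mp this)
  have hFs_ne_bot : Fm f ψ xstar ≠ ⊥ := by
    simp only [Fm, ne_eq, EReal.add_eq_bot_iff]
    push_neg
    exact ⟨EReal.coe_ne_bot _, hψbot _⟩
  obtain ⟨s, hs⟩ : ∃ s : ℝ, Fm f ψ xstar = (s : EReal) :=
    ⟨_, (EReal.coe_toReal hFs_ne_top hFs_ne_bot).symm⟩
  set u := x - xstar with hu
  set I : ℝ := ⟪H u, u⟫ with hI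
  have hIle : I ≤ ‖H‖ * ‖u‖ ^ 2 := by
    calc I ≤ ‖H u‖ * ‖u‖ := real_inner_le_norm _ _
    _ ≤ (‖H‖ * ‖u‖) * ‖u‖ := by
        apply mul_le_mul_of_nonneg_right (H.le_opNorm u) (norm_nonneg u)
    _ = ‖H‖ * ‖u‖ ^ 2 := by ring
  -- the master bound
  have key : ∀ lam : ℝ, lam ∈ Set.Icc (0 : ℝ) 1 →
      (⨅ e, Qm f ψ H x e) ≤
        ((lam * (s - (f x + px)) - μ * lam * (1 - lam) / 2 * ‖u‖ ^ 2
          + lam ^ 2 / 2 * I : ℝ) : EReal) := by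
    intro lam hlam
    obtain ⟨hl0, hl1⟩ := hlam
    set d : EuclideanSpace ℝ (Fin n) := lam • (xstar - x) with hd
    have hxd : x + d = (1 - lam) • x + (1 - (1 - lam)) • xstar := by
      rw [hd]
      module
    have hoss := hossc (1 - lam) ⟨by linarith, by linarith⟩
    rw [← hxd, hFx, hs] at hoss
    have hrhs : ((1 - lam : ℝ) : EReal) * ((f x + px : ℝ) : EReal)
        + ((1 - (1 - lam) : ℝ) : EReal) * (s : EReal)
        - ((μ * (1 - lam) * (1 - (1 - lam)) / 2 * ‖x - xstar‖ ^ 2 : ℝ) : EReal)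
        = (((1 - lam) * (f x + px) + lam * s
            - μ * (1 - lam) * lam / 2 * ‖u‖ ^ 2 : ℝ) : EReal) := by
      rw [← hu]
      norm_cast
      ring
    rw [hrhs] at hoss
    have hqne : ψ (x + d) ≠ ⊤ := by
      intro h
      rw [Fm, h, EReal.add_top_iff_ne_bot.mpr (EReal.coe_ne_bot _)] at hoss
      exact (EReal.coe_ne_top _) (top_le_iff.mp hoss)
    obtain ⟨q, hq⟩ : ∃ q : ℝ, ψ (x + d) = (q : EReal) :=
      ⟨_, (EReal.coe_toReal hqne (hψbot _)).symm⟩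
    rw [Fm, hq] at hoss
    have hossR : f (x + d) + q ≤ (1 - lam) * (f x + px) + lam * s
        - μ * (1 - lam) * lam / 2 * ‖u‖ ^ 2 := by
      exact_mod_cast hoss
    have hgrad : ⟪gradient f x, d⟫ ≤ f (x + d) - f x := grad_ineq f hf hfconv x d
    have hHd : ⟪H d, d⟫ = lam ^ 2 * I := by
      have hd2 : d = (-lam) • u := by
        rw [hd, hu]
        module
      rw [hd2, map_smul, real_inner_smul_left, real_inner_smul_right, hI]
      ring
    have hQd : Qm f ψ H x d
        = ((⟪gradient f x, d⟫ + 1 / 2 * ⟪H d, d⟫ + q - px : ℝ) : EReal) := by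
      rw [Qm, hq, hpx]
      norm_cast
    refine le_trans (iInf_le _ d) ?_
    rw [hQd, EReal.coe_le_coe_iff, hHd]
    nlinarith [hossR, hgrad]
  refine ⟨?_, ?_⟩
  · intro lam hlam
    obtain ⟨hl0, hl1⟩ := hlam
    constructor
    · refine le_trans (key lam ⟨hl0, hl1⟩) ?_
      rw [hFx, hs]
      norm_cast
    · rw [hFx, hs]
      norm_cast
      nlinarith [mul_le_mul_of_nonneg_left hIle (sq_nonneg lam)]
  · have hHn : (0:ℝ) ≤ ‖H‖ := norm_nonneg H
    set lam0 : ℝ := μ / (μ + ‖H‖) with hlam0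
    rcases eq_or_lt_of_le (add_nonneg hμ hHn) with h0 | hpos
    · have : lam0 = 0 := by
        have hμ0 : μ = 0 := by nlinarith
        rw [hlam0, hμ0, zero_div]
      rw [this]
      refine le_trans (key 0 ⟨le_refl 0, zero_le_one⟩) ?_
      rw [hFx, hs]
      have hz : ((0:ℝ) * (s - (f x + px)) - μ * 0 * (1 - 0) / 2 * ‖u‖ ^ 2
          + 0 ^ 2 / 2 * I : ℝ) ≤ 0 * (s - (f x + px)) := le_of_eq (by ring)
      exact_mod_cast hz
    · have hne : μ + ‖H‖ ≠ 0 := ne_of_gt hpos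
      have hl0 : 0 ≤ lam0 := div_nonneg hμ (le_of_lt hpos)
      have hl1 : lam0 ≤ 1 := by
        rw [hlam0, div_le_one hpos]
        linarith
      have hzero : ‖H‖ * lam0 ^ 2 - μ * lam0 * (1 - lam0) = 0 := by
        have hc : lam0 * (μ + ‖H‖) = μ := by
          rw [hlam0, div_mul_cancel₀ _ hne]
        linear_combination lam0 * hc
      have h2 : (‖H‖ * lam0 ^ 2 - μ * lam0 * (1 - lam0)) * ‖u‖ ^ 2 = 0 := by
        rw [hzero]; ring
      refine le_trans (key lam0 ⟨hl0, hl1⟩) ?_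
      rw [hFx, hs]
      have hr : lam0 * (s - (f x + px)) - μ * lam0 * (1 - lam0) / 2 * ‖u‖ ^ 2
          + lam0 ^ 2 / 2 * I ≤ lam0 * (s - (f x + px)) := by
        nlinarith [mul_le_mul_of_nonneg_left hIle (sq_nonneg lam0), h2]
      exact_mod_cast hr
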